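/- arXiv:2305.17532 — 5 statements merged into one kernel-verified Lean document; each statement's English description precedes it below -/
import Mathlib

section
/- Let R = k[x,y]_{(x,y)} with maximal ideal m = (x,y), I_n = (x^{3n}) and J_n = (x^n · m^{2n}) for n ≥ 1. Then {I_n} and {J_n} are filtrations with I_n ⊆ J_n for all n, the filtration {I_n} satisfies A(1), but {J_n} does not satisfy A(1). -/
open MvPolynomial

noncomputable abbrev mxy (k : Type*) [Field k] : Ideal (MvPolynomial (Fin 2) k) :=
  Ideal.span {X 0, X 1}

noncomputable abbrev Rxy (k : Type*) [Field k] [(mxy k).IsPrime] : Type _ :=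
  Localization.AtPrime (mxy k)

noncomputable abbrev xx (k : Type*) [Field k] [(mxy k).IsPrime] : Rxy k :=
  algebraMap (MvPolynomial (Fin 2) k) (Rxy k) (X 0)

noncomputable abbrev yy (k : Type*) [Field k] [(mxy k).IsPrime] : Rxy k :=
  algebraMap (MvPolynomial (Fin 2) k) (Rxy k) (X 1)

/-- The saturation `I : J^∞ = ⋃ₖ (I : Jᵏ)`. -/
noncomputable def sat {A : Type*} [CommRing A] (I J : Ideal A) : Ideal A :=
  ⨆ n : ℕ, Submodule.colon I ((J ^ n : Ideal A) : Set A)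

/-- The quotient module `S/I` of two ideals (with `I ⊆ S` in the intended use). -/
noncomputable abbrev idealQuot {A : Type*} [CommRing A] (S I : Ideal A) :=
  S ⧸ (Submodule.comap S.subtype I)

/-- The length of a module, expressed as the Krull dimension of its submodule lattice. -/
noncomputable def mlength (R M : Type*) [CommRing R] [AddCommGroup M] [Module R M] : ℕ∞ :=
  WithBot.unbotD 0 (Order.krullDim (Submodule R M))

set_option linter.unusedSectionVars false

section helpers
variable (k : Type*) [Field k] [(mxy k).IsPrime]

lemma alg_inj : Function.Injective (algebraMap (MvPolynomial (Fin 2) k) (Rxy k)) :=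
  IsLocalization.injective _ ((mxy k).primeCompl_le_nonZeroDivisors)

lemma maxIdeal_eq :
    IsLocalRing.maximalIdeal (Rxy k)
      = Ideal.map (algebraMap (MvPolynomial (Fin 2) k) (Rxy k)) (mxy k) :=
  (Localization.AtPrime.map_eq_maximalIdeal).symm

lemma prime_X0 : Prime (X 0 : MvPolynomial (Fin 2) k) := by
  rw [← MulEquiv.prime_iff (finSuccEquiv k 1).toMulEquiv]
  simpa [MvPolynomial.finSuccEquiv_X_zero] using (Polynomial.prime_X
    (R := MvPolynomial (Fin 1) k))

lemma spanX0_le : Ideal.span {(X 0 : MvPolynomial (Fin 2) k)} ≤ mxy k := by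
  rw [Ideal.span_le]
  intro a ha
  simp only [Set.mem_singleton_iff] at ha
  subst ha
  exact Ideal.subset_span (by simp)

lemma disj : Disjoint ((mxy k).primeCompl : Set (MvPolynomial (Fin 2) k))
    (Ideal.span {(X 0 : MvPolynomial (Fin 2) k)} : Set _) := by
  rw [Set.disjoint_left]
  intro a ha ha'
  exact ha (spanX0_le k ha')

lemma spanX0_isPrime : (Ideal.span {(X 0 : MvPolynomial (Fin 2) k)}).IsPrime :=
  (Ideal.span_singleton_prime (MvPolynomial.X_ne_zero 0)).mpr (prime_X0 k)

lemma span_xx_eq : Ideal.span {xx k}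
    = Ideal.map (algebraMap (MvPolynomial (Fin 2) k) (Rxy k))
        (Ideal.span {(X 0 : MvPolynomial (Fin 2) k)}) := by
  rw [Ideal.map_span, Set.image_singleton]

lemma prime_xx : Prime (xx k) := by
  have h1 : (Ideal.span {xx k}).IsPrime := by
    rw [span_xx_eq]
    exact IsLocalization.isPrime_of_isPrime_disjoint (mxy k).primeCompl _ _
      (spanX0_isPrime k) (disj k)
  have h0 : xx k ≠ 0 := by
    intro h
    exact MvPolynomial.X_ne_zero 0 (alg_inj k (h.trans (map_zero _).symm))
  exact (Ideal.span_singleton_prime h0).mp h1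

lemma not_dvd_xy : ¬ xx k ∣ yy k := by
  intro h
  rw [← Ideal.mem_span_singleton, span_xx_eq] at h
  have h2 : (X 1 : MvPolynomial (Fin 2) k) ∈ Ideal.span {(X 0 : MvPolynomial (Fin 2) k)} := by
    have := IsLocalization.comap_map_of_isPrime_disjoint (mxy k).primeCompl (Rxy k)
      (spanX0_isPrime k) (disj k)
    rw [← this]
    exact Ideal.mem_comap.mpr h
  rw [Ideal.mem_span_singleton] at h2
  have := map_dvd (MvPolynomial.eval (fun i : Fin 2 => if i = 0 then (0:k) else 1)) h2
  simp at this

lemma xx_mem_max : xx k ∈ IsLocalRing.maximalIdeal (Rxy k) := by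
  rw [maxIdeal_eq]
  exact Ideal.mem_map_of_mem _ (Ideal.subset_span (by simp))

lemma yy_mem_max : yy k ∈ IsLocalRing.maximalIdeal (Rxy k) := by
  rw [maxIdeal_eq]
  exact Ideal.mem_map_of_mem _ (Ideal.subset_span (by simp))

end helpers

section helpers2
variable (k : Type*) [Field k] [(mxy k).IsPrime]

lemma const_ne_zero_of_not_mem {s : MvPolynomial (Fin 2) k} (hs : s ∉ mxy k) :
    MvPolynomial.eval (fun _ : Fin 2 => (0 : k)) s ≠ 0 := by
  intro h0
  apply hs
  have hset : mxy k = Ideal.span (MvPolynomial.X '' (Set.univ : Set (Fin 2))) := by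
    unfold mxy
    congr 1
    rw [Set.image_univ]
    ext p
    constructor
    · rintro (rfl | rfl) <;> simp
    · rintro ⟨i, rfl⟩
      fin_cases i <;> simp
  rw [hset, mem_ideal_span_X_image]
  intro m hm
  by_contra hc
  push_neg at hc
  have hm0 : m = 0 := by
    ext i
    exact hc i (Set.mem_univ i)
  rw [MvPolynomial.eval_zero', MvPolynomial.constantCoeff_eq] at h0
  rw [hm0] at hm
  exact MvPolynomial.mem_support_iff.mp hm h0

lemma xx_not_mem_cube : xx k ∉ (IsLocalRing.maximalIdeal (Rxy k)) ^ 3 := by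
  intro hx
  rw [maxIdeal_eq, ← Ideal.map_pow] at hx
  obtain ⟨⟨a, s⟩, hs⟩ :=
    (IsLocalization.mem_map_algebraMap_iff (mxy k).primeCompl (Rxy k)).mp hx
  have key : (X 0 : MvPolynomial (Fin 2) k) * (s : MvPolynomial (Fin 2) k) = (a : _) := by
    apply alg_inj k
    rw [map_mul]
    exact hs
  -- push into Polynomial k via aeval (fun _ => X)
  set φ : MvPolynomial (Fin 2) k →+* Polynomial k :=
    (MvPolynomial.aeval (fun _ : Fin 2 => (Polynomial.X : Polynomial k))).toRingHom with hφ
  have hmap : Ideal.map φ ((mxy k) ^ 3) ≤ Ideal.span {(Polynomial.X : Polynomial k)} ^ 3 := by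
    rw [Ideal.map_pow]
    apply Ideal.pow_right_mono
    rw [Ideal.map_span, Ideal.span_le]
    rintro t ⟨p, hp, rfl⟩
    rcases hp with rfl | rfl <;>
      · apply Ideal.subset_span
        simp [hφ]
  have hmem : φ ((X 0 : MvPolynomial (Fin 2) k) * (s : MvPolynomial (Fin 2) k))
      ∈ Ideal.span {(Polynomial.X : Polynomial k)} ^ 3 := by
    apply hmap
    rw [key]
    exact Ideal.mem_map_of_mem φ a.2
  rw [Ideal.span_singleton_pow, Ideal.mem_span_singleton, map_mul] at hmem
  obtain ⟨h, hh⟩ := hmem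
  -- compare coefficient 1
  have hcoeff : (φ (X 0) * φ (s : MvPolynomial (Fin 2) k)).coeff 1
      = (φ (s : MvPolynomial (Fin 2) k)).coeff 0 := by
    have : φ (X 0 : MvPolynomial (Fin 2) k) = Polynomial.X := by simp [hφ]
    rw [this, Polynomial.coeff_X_mul]
  have heval : ∀ p : MvPolynomial (Fin 2) k,
      (φ p).coeff 0 = MvPolynomial.eval (fun _ : Fin 2 => (0 : k)) p := by
    intro p
    induction p using MvPolynomial.induction_on with
    | C c => simp [hφ]
    | add p q hp hq => simp [map_add, hp, hq, Polynomial.coeff_add]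
    | mul_X p i hp => simp [map_mul, Polynomial.mul_coeff_zero, hφ]
  have h0 : (φ (X 0) * φ (s : MvPolynomial (Fin 2) k)).coeff 1 = 0 := by
    rw [hh, mul_comm, Polynomial.coeff_mul_X_pow']
    norm_num
  rw [hcoeff, heval] at h0
  exact const_ne_zero_of_not_mem k s.2 h0

lemma sat_I_eq (n : ℕ) :
    sat (Ideal.span {xx k ^ n}) (IsLocalRing.maximalIdeal (Rxy k))
      = Ideal.span {xx k ^ n} := by
  apply le_antisymm
  · apply iSup_le
    intro t f hf
    rw [Submodule.mem_colon] at hf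
    have hy : yy k ^ t ∈ (IsLocalRing.maximalIdeal (Rxy k)) ^ t :=
      Ideal.pow_mem_pow (yy_mem_max k) t
    have hfy := hf _ hy
    rw [smul_eq_mul, Ideal.mem_span_singleton] at hfy
    rw [Ideal.mem_span_singleton]
    have hnd : ¬ xx k ∣ yy k ^ t := fun h => not_dvd_xy k ((prime_xx k).dvd_of_dvd_pow h)
    rw [mul_comm] at hfy
    exact (prime_xx k).pow_dvd_of_dvd_mul_left n hnd hfy
  · refine le_trans ?_ (le_iSup _ 0)
    intro f hf
    rw [Submodule.mem_colon]
    intro p _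
    rw [smul_eq_mul]
    exact Ideal.mul_mem_right p _ hf

end helpers2

/-- in `R = k[x,y]_{(x,y)}` with maximal ideal `m`, let `I_n = (x^{3n})` and
`J_n = (x^n)·m^{2n}`.  Then `{I_n}` and `{J_n}` are filtrations with `I_n ⊆ J_n`,
`{I_n}` satisfies `A(1)` but `{J_n}` does not. -/
theorem stmt3 (k : Type*) [Field k] [(mxy k).IsPrime]
    (I J : ℕ → Ideal (Rxy k))
    (hI : ∀ n, 1 ≤ n → I n = Ideal.span {xx k ^ (3 * n)})
    (hJ : ∀ n, 1 ≤ n →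
      J n = Ideal.span {xx k} ^ n * (IsLocalRing.maximalIdeal (Rxy k)) ^ (2 * n)) :
    (∀ m n, 1 ≤ m → 1 ≤ n → I m * I n ≤ I (m + n)) ∧
    (∀ m n, 1 ≤ m → 1 ≤ n → J m * J n ≤ J (m + n)) ∧
    (∀ n, 1 ≤ n → I n ≤ J n) ∧
    (∀ n, 1 ≤ n →
      sat (I n) (IsLocalRing.maximalIdeal (Rxy k)) ⊓ (IsLocalRing.maximalIdeal (Rxy k)) ^ n
        = I n ⊓ (IsLocalRing.maximalIdeal (Rxy k)) ^ n) ∧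
    ¬ (∀ n, 1 ≤ n →
      sat (J n) (IsLocalRing.maximalIdeal (Rxy k)) ⊓ (IsLocalRing.maximalIdeal (Rxy k)) ^ n
        = J n ⊓ (IsLocalRing.maximalIdeal (Rxy k)) ^ n) := by
  refine ⟨?_, ?_, ?_, ?_, ?_⟩
  · intro m n hm hn
    rw [hI m hm, hI n hn, hI (m + n) (le_trans hm (Nat.le_add_right m n)),
      Ideal.span_singleton_mul_span_singleton, ← pow_add,
      show 3 * m + 3 * n = 3 * (m + n) by ring]
  · intro m n hm hn
    rw [hJ m hm, hJ n hn, hJ (m + n) (le_trans hm (Nat.le_add_right m n)),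
      mul_mul_mul_comm, ← pow_add, ← pow_add,
      show 2 * m + 2 * n = 2 * (m + n) by ring]
  · intro n hn
    rw [hI n hn, hJ n hn, Ideal.span_le, Set.singleton_subset_iff]
    rw [show 3 * n = n + 2 * n by ring, pow_add]
    refine Ideal.mul_mem_mul ?_ (Ideal.pow_mem_pow (xx_mem_max k) (2 * n))
    rw [Ideal.span_singleton_pow]
    exact Ideal.mem_span_singleton_self _
  · intro n hn
    rw [hI n hn, sat_I_eq]
  · intro hA
    have h1 := hA 1 le_rfl
    have hJ1 : J 1 = Ideal.span {xx k} * (IsLocalRing.maximalIdeal (Rxy k)) ^ 2 := by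
      rw [hJ 1 le_rfl, pow_one, mul_one]
    have hxsat : xx k ∈ sat (J 1) (IsLocalRing.maximalIdeal (Rxy k)) := by
      refine (le_iSup (fun t => Submodule.colon (J 1)
        (((IsLocalRing.maximalIdeal (Rxy k)) ^ t : Ideal (Rxy k)) : Set (Rxy k))) 2) ?_
      rw [Submodule.mem_colon]
      intro p hp
      rw [smul_eq_mul, hJ1]
      exact Ideal.mul_mem_mul (Ideal.mem_span_singleton_self _) hp
    have hmem : xx k ∈ J 1 ⊓ (IsLocalRing.maximalIdeal (Rxy k)) ^ 1 := by
      rw [← h1]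
      exact ⟨hxsat, by rw [pow_one]; exact xx_mem_max k⟩
    have hJle : J 1 ≤ (IsLocalRing.maximalIdeal (Rxy k)) ^ 3 := by
      rw [hJ1, show (3 : ℕ) = 1 + 2 from rfl, pow_add, pow_one]
      exact Ideal.mul_mono_left (by
        rw [Ideal.span_le, Set.singleton_subset_iff]
        exact xx_mem_max k)
    exact xx_not_mem_cube k (hJle hmem.1)
end

section
/- Let (R, m) be a Noetherian local ring and let {I_n}, {J_n} be filtrations of ideals with J_n ⊆ I_n and λ_R(I_n/J_n) < ∞ for all n ≥ 1. Suppose {J_n} satisfies property A(c) for some c ∈ ℤ_{>0}. Then {I_n} also satisfies A(c). -/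
/-- If `J ≤ I` and `K^k * I ≤ J`, then the saturations of `I` and `J` at `K` agree. -/
theorem sat_eq_of_pow_mul_le {A : Type*} [CommRing A] {I J K : Ideal A} (hJI : J ≤ I) {k : ℕ}
    (h : K ^ k * I ≤ J) : sat I K = sat J K := by
  apply le_antisymm
  · refine iSup_le fun j => le_trans ?_ (le_iSup (fun n => Submodule.colon J ((K ^ n : Ideal A) : Set A)) (k + j))
    intro r hr
    rw [Submodule.mem_colon] at hr ⊢
    intro p hp
    rw [pow_add] at hp
    refine Submodule.mul_induction_on hp (fun a ha b hb => ?_) (fun x y hx hy => ?_)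
    · have h1 : r • b ∈ I := hr b hb
      have h2 : a * (r * b) ∈ K ^ k * I := Ideal.mul_mem_mul ha h1
      have h3 := h h2
      rw [smul_eq_mul, show r * (a * b) = a * (r * b) by ring]
      exact h3
    · simpa [smul_eq_mul, mul_add] using J.add_mem hx hy
  · refine iSup_le fun j => le_trans ?_ (le_iSup (fun n => Submodule.colon I ((K ^ n : Ideal A) : Set A)) j)
    intro r hr
    rw [Submodule.mem_colon] at hr ⊢
    exact fun p hp => hJI (hr p hp)

/-- Over a Noetherian local ring, if `I/J` has finite length then some power of
the maximal ideal times `I` is contained in `J`. -/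
theorem exists_pow_mul_le {R : Type*} [CommRing R] [IsNoetherianRing R] [IsLocalRing R]
    {I J : Ideal R} (hfin : IsFiniteLength R (idealQuot I J)) :
    ∃ k, (IsLocalRing.maximalIdeal R) ^ k * I ≤ J := by
  set m := IsLocalRing.maximalIdeal R
  set M := idealQuot I J
  obtain ⟨h1, h2⟩ := isFiniteLength_iff_isNoetherian_isArtinian.mp hfin
  have hmono : Monotone fun j : ℕ => OrderDual.toDual (m ^ j • (⊤ : Submodule R M)) := by
    intro a b hab
    exact Submodule.smul_mono_left (Ideal.pow_le_pow_right hab)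
  obtain ⟨k, hk⟩ := IsArtinian.monotone_stabilizes
    (⟨fun j : ℕ => OrderDual.toDual (m ^ j • (⊤ : Submodule R M)), hmono⟩ : ℕ →o (Submodule R M)ᵒᵈ)
  have hstab : m ^ k • (⊤ : Submodule R M) = m ^ (k + 1) • (⊤ : Submodule R M) :=
    congrArg OrderDual.ofDual (hk (k + 1) (Nat.le_succ k))
  have hbot : m ^ k • (⊤ : Submodule R M) = ⊥ := by
    refine Submodule.eq_bot_of_le_smul_of_le_jacobson_bot m (m ^ k • ⊤)
      (IsNoetherian.noetherian _) ?_ ?_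
    · refine le_of_eq (hstab.trans ?_)
      rw [pow_succ', ← smul_eq_mul, Submodule.smul_assoc]
    · exact (IsLocalRing.jacobson_eq_maximalIdeal ⊥ bot_ne_top).ge
  refine ⟨k, ?_⟩
  rw [Submodule.mul_le]
  intro r hr x hx
  have hz : r • (Submodule.Quotient.mk (⟨x, hx⟩ : I) : M) ∈ m ^ k • (⊤ : Submodule R M) :=
    Submodule.smul_mem_smul hr Submodule.mem_top
  rw [hbot, Submodule.mem_bot, ← Submodule.Quotient.mk_smul,
    Submodule.Quotient.mk_eq_zero] at hz
  simpa using hz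

/-- if `(R,m)` is Noetherian local, `{I_n}`, `{J_n}` are filtrations with
`J_n ⊆ I_n` and `λ_R(I_n/J_n) < ∞` for all `n ≥ 1`, and `{J_n}` satisfies `A(c)`,
then `{I_n}` also satisfies `A(c)`. -/
theorem stmt5 {R : Type*} [CommRing R] [IsNoetherianRing R] [IsLocalRing R]
    (I J : ℕ → Ideal R) (hI0 : I 0 = ⊤) (hJ0 : J 0 = ⊤)
    (hIanti : ∀ m n, m ≤ n → I n ≤ I m) (hJanti : ∀ m n, m ≤ n → J n ≤ J m)
    (hImul : ∀ m n, I m * I n ≤ I (m + n)) (hJmul : ∀ m n, J m * J n ≤ J (m + n))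
    (hJI : ∀ n, J n ≤ I n)
    (hfin : ∀ n, 1 ≤ n → IsFiniteLength R (idealQuot (I n) (J n)))
    (c : ℕ) (hc : 1 ≤ c)
    (hJA : ∀ n, sat (J n) (IsLocalRing.maximalIdeal R) ⊓ (IsLocalRing.maximalIdeal R) ^ (c * n)
      = J n ⊓ (IsLocalRing.maximalIdeal R) ^ (c * n)) :
    ∀ n, sat (I n) (IsLocalRing.maximalIdeal R) ⊓ (IsLocalRing.maximalIdeal R) ^ (c * n)
      = I n ⊓ (IsLocalRing.maximalIdeal R) ^ (c * n) := by
  intro n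
  set m := IsLocalRing.maximalIdeal R
  have hIsat : I n ≤ sat (I n) m := by
    refine le_trans ?_ (le_iSup (fun j => Submodule.colon (I n) ((m ^ j : Ideal R) : Set R)) 0)
    intro x hx
    rw [Submodule.mem_colon]
    exact fun p _ => Ideal.mul_mem_right p _ hx
  rcases Nat.eq_zero_or_pos n with h0 | hpos
  · subst h0
    have : sat (I 0) m = ⊤ := top_le_iff.mp (hI0 ▸ hIsat)
    rw [this, hI0]
  · obtain ⟨k, hk⟩ := exists_pow_mul_le (hfin n hpos)
    have hsat : sat (I n) m = sat (J n) m := sat_eq_of_pow_mul_le (hJI n) hk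
    refine le_antisymm ?_ (inf_le_inf_right _ hIsat)
    calc sat (I n) m ⊓ m ^ (c * n) = J n ⊓ m ^ (c * n) := by rw [hsat, hJA n]
    _ ≤ I n ⊓ m ^ (c * n) := inf_le_inf_right _ (hJI n)
end

section
/- Let R = k[x]_{(x)} and I_n = (x^{⌈nπ⌉}) for n ≥ 1. Then {I_n} is a filtration, and for each fixed n there exists r ∈ ℤ_{>0} with r⌈nπ⌉ ≥ ⌈rnπ⌉ + 1; hence for every f ∈ I_n there is r > 0 with f^r ∈ m_R · I_{rn}. -/
set_option synthInstance.maxHeartbeats 1000000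
set_option maxHeartbeats 2000000

/-- The ideal `(x)` in `k[x]`. -/
noncomputable abbrev mx (k : Type*) [Field k] : Ideal (Polynomial k) :=
  Ideal.span {Polynomial.X}

/-- The local ring `R = k[x]_{(x)}`. -/
noncomputable abbrev Rx (k : Type*) [Field k] [(mx k).IsPrime] : Type _ :=
  Localization.AtPrime (mx k)

/-- The image of `x` in `R = k[x]_{(x)}`. -/
noncomputable abbrev xe (k : Type*) [Field k] [(mx k).IsPrime] : Rx k :=
  algebraMap (Polynomial k) (Rx k) Polynomial.X

lemma ceil_gap (n : ℕ) (hn : 1 ≤ n) : ∃ r : ℕ, 1 ≤ r ∧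
    ⌈((r * n : ℕ) : ℝ) * Real.pi⌉₊ + 1 ≤ r * ⌈(n : ℝ) * Real.pi⌉₊ := by
  have hpi := Real.pi_pos
  have hirr : Irrational ((n : ℝ) * Real.pi) := irrational_pi.natCast_mul (by omega)
  have hpos : (0:ℝ) ≤ (n : ℝ) * Real.pi := by positivity
  have hlt : (n : ℝ) * Real.pi < ⌈(n : ℝ) * Real.pi⌉₊ := by
    refine lt_of_le_of_ne (Nat.le_ceil _) ?_
    intro h
    exact (Nat.not_irrational ⌈(n : ℝ) * Real.pi⌉₊) (h ▸ hirr)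
  set ε : ℝ := (⌈(n : ℝ) * Real.pi⌉₊ : ℝ) - (n : ℝ) * Real.pi with hε
  have hεpos : 0 < ε := by simp [hε]; linarith
  refine ⟨⌈2 / ε⌉₊, ?_, ?_⟩
  · have : (0:ℝ) < 2 / ε := by positivity
    exact Nat.one_le_iff_ne_zero.mpr (by positivity)
  set r : ℕ := ⌈2 / ε⌉₊ with hr
  have hrε : 2 ≤ (r : ℝ) * ε := by
    have h1 : 2 / ε ≤ (r : ℝ) := Nat.le_ceil _
    calc (2:ℝ) = 2 / ε * ε := by field_simp
    _ ≤ (r : ℝ) * ε := by nlinarith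
  have key : ((⌈((r * n : ℕ) : ℝ) * Real.pi⌉₊ : ℝ) + 1) < (r : ℝ) * ⌈(n : ℝ) * Real.pi⌉₊ := by
    have h2 : (⌈((r * n : ℕ) : ℝ) * Real.pi⌉₊ : ℝ) < ((r * n : ℕ) : ℝ) * Real.pi + 1 :=
      Nat.ceil_lt_add_one (by positivity)
    have : ((r * n : ℕ) : ℝ) * Real.pi = (r : ℝ) * ((n : ℝ) * Real.pi) := by
      push_cast; ring
    have h2' := h2.trans_eq (by rw [this])
    have h3 : (r : ℝ) * ⌈(n : ℝ) * Real.pi⌉₊ = (r:ℝ) * ((n:ℝ) * Real.pi) + (r:ℝ) * ε := by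
      rw [hε]; ring
    linarith [h2', h3, hrε]
  exact_mod_cast key.le

/-- in `R = k[x]_{(x)}`, the ideals `I_n = (x^{⌈nπ⌉})` form a filtration;
for each fixed `n ≥ 1` there is `r ∈ ℤ_{>0}` with `r⌈nπ⌉ ≥ ⌈rnπ⌉ + 1`; hence every
`f ∈ I_n` satisfies `f^r ∈ m_R · I_{rn}` for some `r > 0`. -/
theorem stmt8 (k : Type*) [Field k] [(mx k).IsPrime]
    (I : ℕ → Ideal (Rx k))
    (hI : ∀ n, 1 ≤ n → I n = Ideal.span {xe k ^ (⌈(n : ℝ) * Real.pi⌉₊)}) :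
    (∀ m n, 1 ≤ m → 1 ≤ n → I m * I n ≤ I (m + n)) ∧
    (∀ n, 1 ≤ n → ∃ r : ℕ, 1 ≤ r ∧
      ⌈((r * n : ℕ) : ℝ) * Real.pi⌉₊ + 1 ≤ r * ⌈(n : ℝ) * Real.pi⌉₊) ∧
    (∀ n, 1 ≤ n → ∀ f ∈ I n, ∃ r : ℕ, 1 ≤ r ∧
      f ^ r ∈ (IsLocalRing.maximalIdeal (Rx k)) * I (r * n)) := by
  have hxm : xe k ∈ IsLocalRing.maximalIdeal (Rx k) := by
    rw [IsLocalization.AtPrime.to_map_mem_maximal_iff (Rx k) (mx k)]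
    exact Ideal.subset_span rfl
  refine ⟨?_, fun n hn => ceil_gap n hn, ?_⟩
  · intro m n hm hn
    rw [hI m hm, hI n hn, hI (m+n) (by omega), Ideal.span_singleton_mul_span_singleton,
      ← pow_add, Ideal.span_singleton_le_span_singleton]
    apply pow_dvd_pow
    refine Nat.ceil_le.mpr ?_
    push_cast
    have h1 := Nat.le_ceil ((m:ℝ) * Real.pi)
    have h2 := Nat.le_ceil ((n:ℝ) * Real.pi)
    nlinarith [Real.pi_pos]
  · intro n hn f hf
    obtain ⟨r, hr, hkey⟩ := ceil_gap n hn
    refine ⟨r, hr, ?_⟩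
    rw [hI n hn] at hf
    obtain ⟨g, hg⟩ := Ideal.mem_span_singleton'.mp hf
    rw [hI (r * n) (Nat.one_le_iff_ne_zero.mpr (Nat.mul_ne_zero (by omega) (by omega)))]
    set a := ⌈(n : ℝ) * Real.pi⌉₊ with ha
    set b := ⌈((r * n : ℕ) : ℝ) * Real.pi⌉₊ with hb
    have hkey' : b + 1 ≤ r * a := hkey
    have : f ^ r = (g ^ r * xe k ^ (r * a - b - 1)) * (xe k * xe k ^ b) := by
      rw [← hg, mul_pow, mul_assoc, ← pow_succ', ← pow_add, ← pow_mul]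
      congr 2
      rw [mul_comm a r, Nat.sub_sub, Nat.sub_add_cancel hkey]
    rw [this]
    exact Ideal.mul_mem_left _ _
      (Ideal.mul_mem_mul hxm (Ideal.subset_span rfl))
end

section
/- Let R = k[x]_{(x)} and I_n = (x^{⌈nπ⌉}). Then I_n : m_R^∞ = R for all n ≥ 1, and lim_{n→∞} λ_R(R/I_n)/n = lim_{n→∞} ⌈nπ⌉/n = π; that is, the epsilon multiplicity of the filtration {I_n} equals π and is positive. -/
set_option synthInstance.maxHeartbeats 1000000
set_option maxHeartbeats 2000000

/- ---------- auxiliary lemmas ---------- -/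

lemma aux_krullDim_fin (m : ℕ) : Order.krullDim (Fin (m+1)) = m := by
  apply le_antisymm
  · rw [Order.krullDim_eq_iSup_length]
    rw [show ((m : WithBot ℕ∞)) = (((m : ℕ∞) : WithBot ℕ∞)) from rfl]
    refine WithBot.coe_le_coe.mpr (iSup_le fun p => ?_)
    refine Nat.cast_le.mpr ?_
    have := Fintype.card_le_of_injective p.toFun p.strictMono.injective
    simpa using this
  · simpa using Order.LTSeries.length_le_krullDim
      (⟨m, id, fun i => by simp only [id]; exact Fin.castSucc_lt_succ (i := i)⟩ : LTSeries (Fin (m+1)))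

noncomputable def auxDvrIso {R : Type*} [CommRing R] [IsDomain R] [IsDiscreteValuationRing R]
    {p : R} (hp : Irreducible p) (m : ℕ) :
    (Fin (m+1))ᵒᵈ ≃o {J : Ideal R // Ideal.span {p ^ m} ≤ J} := by
  have hp0 : p ≠ 0 := hp.ne_zero
  have hpu : ¬ IsUnit p := hp.not_isUnit
  refine StrictMono.orderIsoOfSurjective
    (fun i => ⟨Ideal.span {p ^ ((OrderDual.ofDual i : Fin (m+1)) : ℕ)}, ?_⟩) ?_ ?_
  · rw [Ideal.span_singleton_le_span_singleton]
    exact pow_dvd_pow p (Nat.le_of_lt_succ (OrderDual.ofDual i).isLt)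
  · intro i j hij
    have hji : ((OrderDual.ofDual j : Fin (m+1)) : ℕ) < ((OrderDual.ofDual i : Fin (m+1)) : ℕ) := hij
    rw [Subtype.mk_lt_mk, Ideal.span_singleton_lt_span_singleton]
    refine dvdNotUnit_of_dvd_of_not_dvd (pow_dvd_pow p (le_of_lt hji)) ?_
    rw [pow_dvd_pow_iff hp0 hpu]
    exact not_le.mpr hji
  · rintro ⟨J, hJ⟩
    have hJ0 : J ≠ ⊥ := by
      intro h
      have : p ^ m ∈ J := hJ (Ideal.subset_span rfl)
      rw [h, Ideal.mem_bot] at this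
      exact pow_ne_zero m hp0 this
    obtain ⟨n, hn⟩ := IsDiscreteValuationRing.ideal_eq_span_pow_irreducible hJ0 hp
    have hnm : n ≤ m := by
      rw [hn, Ideal.span_singleton_le_span_singleton, pow_dvd_pow_iff hp0 hpu] at hJ
      exact hJ
    exact ⟨OrderDual.toDual ⟨n, Nat.lt_succ_of_le hnm⟩, by simp [hn]⟩

lemma aux_mlength_dvr_quot {R : Type*} [CommRing R] [IsDomain R] [IsDiscreteValuationRing R]
    {p : R} (hp : Irreducible p) (m : ℕ) :
    mlength R (R ⧸ Ideal.span {p ^ m}) = m := by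
  unfold mlength
  rw [Order.krullDim_eq_of_orderIso
    ((Submodule.comapMkQRelIso (Ideal.span {p ^ m})).trans (auxDvrIso hp m).symm),
    Order.krullDim_orderDual, aux_krullDim_fin]
  rfl

lemma aux_mlength_congr {R M N : Type*} [CommRing R] [AddCommGroup M] [Module R M]
    [AddCommGroup N] [Module R N] (e : M ≃ₗ[R] N) : mlength R M = mlength R N := by
  unfold mlength
  rw [Order.krullDim_eq_of_orderIso (Submodule.orderIsoMapComap e)]

lemma aux_mlength_idealQuot_top {R : Type*} [CommRing R] (S J : Ideal R) (h : S = ⊤) :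
    mlength R (idealQuot S J) = mlength R (R ⧸ J) := by
  subst h
  refine aux_mlength_congr (Submodule.Quotient.equiv _ _ (Submodule.topEquiv) ?_)
  ext x
  simp only [Submodule.mem_map, Submodule.mem_comap]
  constructor
  · rintro ⟨y, hy, rfl⟩
    exact hy
  · intro hx
    exact ⟨⟨x, trivial⟩, hx, rfl⟩

section facts
variable (k : Type*) [Field k] [(mx k).IsPrime]

lemma aux_xe_ne_zero : xe k ≠ 0 := by
  rw [map_ne_zero_iff _ (IsLocalization.injective (Rx k) (mx k).primeCompl_le_nonZeroDivisors)]
  exact Polynomial.X_ne_zero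

noncomputable instance : IsDiscreteValuationRing (Rx k) :=
  IsLocalization.AtPrime.isDiscreteValuationRing_of_dedekind_domain (Polynomial k)
    (fun h => Polynomial.X_ne_zero (R := k) (Ideal.span_singleton_eq_bot.mp h)) (Rx k)

lemma aux_max_eq : IsLocalRing.maximalIdeal (Rx k) = Ideal.span {xe k} := by
  rw [← Localization.AtPrime.map_eq_maximalIdeal]
  show Ideal.map _ (Ideal.span {Polynomial.X}) = _
  rw [Ideal.map_span, Set.image_singleton]

lemma aux_xe_irr : Irreducible (xe k) :=
  IsDiscreteValuationRing.irreducible_of_span_eq_maximalIdeal _ (aux_xe_ne_zero k) (aux_max_eq k)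

end facts

open Filter in
lemma aux_ceil_tendsto :
    Tendsto (fun n : ℕ => ((⌈(n : ℝ) * Real.pi⌉₊ : ℕ) : ℝ) / n) atTop (nhds Real.pi) := by
  apply tendsto_of_tendsto_of_tendsto_of_le_of_le' (g := fun _ : ℕ => Real.pi)
    (h := fun n : ℕ => Real.pi + 1 / n) tendsto_const_nhds
  · simpa using tendsto_const_nhds.add (tendsto_one_div_atTop_nhds_zero_nat (𝕜 := ℝ))
  · filter_upwards [eventually_ge_atTop 1] with n hn
    have hn0 : (0:ℝ) < n := by exact_mod_cast hn
    rw [le_div_iff₀ hn0]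
    calc Real.pi * n = n * Real.pi := by ring
    _ ≤ ⌈(n : ℝ) * Real.pi⌉₊ := Nat.le_ceil _
  · filter_upwards [eventually_ge_atTop 1] with n hn
    have hn0 : (0:ℝ) < n := by exact_mod_cast hn
    rw [div_le_iff₀ hn0]
    have h1 : (⌈(n : ℝ) * Real.pi⌉₊ : ℝ) < (n : ℝ) * Real.pi + 1 :=
      Nat.ceil_lt_add_one (by positivity)
    calc (⌈(n : ℝ) * Real.pi⌉₊ : ℝ) ≤ (n:ℝ) * Real.pi + 1 := le_of_lt h1
    _ = (Real.pi + 1/n) * n := by field_simp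

open Filter in
/-- in `R = k[x]_{(x)}` with `I_n = (x^{⌈nπ⌉})`, one has `I_n : m^∞ = R`
for all `n ≥ 1`, and `λ_R(R/I_n)/n = ⌈nπ⌉/n → π`; the epsilon multiplicity
`ε({I_n}) = limsup λ_R((I_n : m^∞)/I_n)/n` equals `π` and is positive. -/
theorem stmt9 (k : Type*) [Field k] [(mx k).IsPrime]
    (I : ℕ → Ideal (Rx k))
    (hI : ∀ n, 1 ≤ n → I n = Ideal.span {xe k ^ (⌈(n : ℝ) * Real.pi⌉₊)}) :
    (∀ n, 1 ≤ n → sat (I n) (IsLocalRing.maximalIdeal (Rx k)) = ⊤) ∧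
    Tendsto (fun n : ℕ => ((mlength (Rx k) (Rx k ⧸ I n)).toNat : ℝ) / n)
      atTop (nhds Real.pi) ∧
    Tendsto (fun n : ℕ => ((⌈(n : ℝ) * Real.pi⌉₊ : ℕ) : ℝ) / n) atTop (nhds Real.pi) ∧
    Filter.limsup (fun n : ℕ =>
        ((mlength (Rx k)
          (idealQuot (sat (I n) (IsLocalRing.maximalIdeal (Rx k))) (I n))).toNat : ℝ) / n)
      atTop = Real.pi ∧
    0 < Real.pi := by
  have hirr := aux_xe_irr k
  have hmax := aux_max_eq k
  have hIm : ∀ n, 1 ≤ n →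
      I n = (IsLocalRing.maximalIdeal (Rx k)) ^ (⌈(n : ℝ) * Real.pi⌉₊) := by
    intro n hn
    rw [hI n hn, hmax, Ideal.span_singleton_pow]
  have hsat : ∀ n, 1 ≤ n → sat (I n) (IsLocalRing.maximalIdeal (Rx k)) = ⊤ := by
    intro n hn
    rw [eq_top_iff]
    refine le_trans ?_ (le_iSup
      (fun c => Submodule.colon (I n) (((IsLocalRing.maximalIdeal (Rx k)) ^ c : Ideal (Rx k)) : Set (Rx k)))
      (⌈(n : ℝ) * Real.pi⌉₊))
    intro r _
    rw [Submodule.mem_colon]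
    intro p hp
    rw [← hIm n hn] at hp
    exact Submodule.smul_mem _ r hp
  have hlen : ∀ n, 1 ≤ n →
      mlength (Rx k) (Rx k ⧸ I n) = ((⌈(n : ℝ) * Real.pi⌉₊ : ℕ) : ℕ∞) := by
    intro n hn
    rw [hI n hn]
    exact aux_mlength_dvr_quot hirr _
  refine ⟨hsat, ?_, aux_ceil_tendsto, ?_, Real.pi_pos⟩
  · apply aux_ceil_tendsto.congr'
    filter_upwards [eventually_ge_atTop 1] with n hn
    rw [hlen n hn]
    simp
  · have heq : (fun n : ℕ =>
        ((mlength (Rx k)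
          (idealQuot (sat (I n) (IsLocalRing.maximalIdeal (Rx k))) (I n))).toNat : ℝ) / n)
        =ᶠ[atTop] (fun n : ℕ => ((⌈(n : ℝ) * Real.pi⌉₊ : ℕ) : ℝ) / n) := by
      filter_upwards [eventually_ge_atTop 1] with n hn
      rw [aux_mlength_idealQuot_top _ _ (hsat n hn), hlen n hn]
      simp
    rw [Filter.limsup_congr heq]
    exact aux_ceil_tendsto.limsup_eq
end

section
/- Let R = k[x,y]_{(x,y)}, I_n = (x^n) and J_n = (x^{n+1}, x^n y). Then the integral closures of the Rees algebras R[{I_n}] and R[{J_n}] in R[t] are distinct. (Proof idea: if they were equal, then since R[{I_n}] = R[xt] is a finitely generated R-algebra and R is Noetherian, by the Artin–Tate lemma R[{J_n}] would be a finitely generated R-algebra; but R[{J_n}] is not finitely generated over R.) -/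
set_option synthInstance.maxHeartbeats 1000000
set_option maxHeartbeats 2000000

open MvPolynomial

/-- The Rees algebra `⊕ₙ Iₙ tⁿ` of a filtration `{Iₙ}`, as a subalgebra of `A[t]`. -/
noncomputable def filtRees {A : Type*} [CommRing A] (I : ℕ → Ideal A) :
    Subalgebra A (Polynomial A) :=
  Algebra.adjoin A {p : Polynomial A | ∃ n : ℕ, ∃ a ∈ I n, p = Polynomial.C a * Polynomial.X ^ n}

lemma coeffMem {A : Type*} [CommRing A] (x : A) (mA : Ideal A) (J : ℕ → Ideal A)
    (hJ : ∀ n, 1 ≤ n → J n ≤ Ideal.span {x ^ n} * mA) :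
    ∀ p ∈ filtRees J, ∀ n, 1 ≤ n → p.coeff n ∈ Ideal.span {x ^ n} * mA := by
  intro p hp
  induction hp using Algebra.adjoin_induction with
  | mem q hq =>
    obtain ⟨j, a, ha, rfl⟩ := hq
    intro n hn
    rw [Polynomial.coeff_C_mul, Polynomial.coeff_X_pow]
    by_cases h : n = j
    · rw [if_pos h, mul_one]
      exact hJ n hn (h ▸ ha)
    · rw [if_neg h, mul_zero]; exact zero_mem _
  | algebraMap r =>
    intro n hn
    have : (algebraMap A (Polynomial A) r).coeff n = 0 := by
      rw [Polynomial.algebraMap_eq, Polynomial.coeff_C, if_neg (by omega)]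
    rw [this]; exact zero_mem _
  | add p q hp hq ihp ihq =>
    intro n hn
    rw [Polynomial.coeff_add]
    exact add_mem (ihp n hn) (ihq n hn)
  | mul p q hp hq ihp ihq =>
    intro n hn
    rw [Polynomial.coeff_mul]
    refine Ideal.sum_mem _ ?_
    rintro ⟨i, j⟩ hij
    rw [Finset.HasAntidiagonal.mem_antidiagonal] at hij
    show p.coeff i * q.coeff j ∈ _
    rcases Nat.eq_zero_or_pos i with hi | hi
    · have hjn : j = n := by omega
      subst hjn
      exact Ideal.mul_mem_left _ _ (ihq j (by omega))
    rcases Nat.eq_zero_or_pos j with hj | hj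
    · have hin : i = n := by omega
      subst hin
      exact Ideal.mul_mem_right _ _ (ihp i hn)
    · have h2 : p.coeff i * q.coeff j ∈
          (Ideal.span {x ^ i} * mA) * (Ideal.span {x ^ j} * mA) :=
        Ideal.mul_mem_mul (ihp i hi) (ihq j hj)
      have hle : (Ideal.span {x ^ i} * mA) * (Ideal.span {x ^ j} * mA)
          ≤ Ideal.span {x ^ n} * mA := by
        have heq : (Ideal.span {x ^ i} * mA) * (Ideal.span {x ^ j} * mA)
            = (Ideal.span {x ^ i} * Ideal.span {x ^ j}) * (mA * mA) := by ring
        rw [heq, Ideal.span_singleton_mul_span_singleton, ← pow_add, hij]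
        exact Ideal.mul_mono_right Ideal.mul_le_left
      exact hle h2

/-- in `R = k[x,y]_{(x,y)}` with `I_n = (xⁿ)` and `J_n = (x^{n+1}, xⁿy)`,
the integral closures of the Rees algebras `R[{I_n}]` and `R[{J_n}]` in `R[t]` are
distinct. -/
theorem stmt18 (k : Type*) [Field k] [(mxy k).IsPrime]
    (I J : ℕ → Ideal (Rxy k)) (hI0 : I 0 = ⊤) (hJ0 : J 0 = ⊤)
    (hI : ∀ n, 1 ≤ n → I n = Ideal.span {xx k ^ n})
    (hJ : ∀ n, 1 ≤ n → J n = Ideal.span {xx k ^ (n + 1), xx k ^ n * yy k}) :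
    ((integralClosure (↥(filtRees I)) (Polynomial (Rxy k)) : Set (Polynomial (Rxy k)))
      ≠ (integralClosure (↥(filtRees J)) (Polynomial (Rxy k)) : Set (Polynomial (Rxy k)))) := by
  intro heq
  have hxne : xx k ≠ 0 := by
    have hinj : Function.Injective (algebraMap (MvPolynomial (Fin 2) k) (Rxy k)) := by
      apply IsLocalization.injective (M := (mxy k).primeCompl)
      intro a ha
      exact mem_nonZeroDivisors_of_ne_zero (fun h => ha (h ▸ (Ideal.zero_mem (mxy k))))
    intro h
    exact MvPolynomial.X_ne_zero 0 (hinj (by simpa using h))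
  set mA : Ideal (Rxy k) := Ideal.span {xx k, yy k} with hmA
  have hJle : ∀ n, 1 ≤ n → J n ≤ Ideal.span {xx k ^ n} * mA := by
    intro n hn
    rw [hJ n hn, Ideal.span_insert, sup_le_iff]
    constructor
    · rw [Ideal.span_singleton_le_iff_mem, Ideal.mem_span_singleton_mul]
      exact ⟨xx k, Ideal.subset_span (by simp), (pow_succ _ _).symm⟩
    · rw [Ideal.span_le, Set.singleton_subset_iff, SetLike.mem_coe,
        Ideal.mem_span_singleton_mul]
      exact ⟨yy k, Ideal.subset_span (by simp), rfl⟩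
  set xt : Polynomial (Rxy k) := Polynomial.C (xx k) * Polynomial.X with hxt
  have hmemI : xt ∈ filtRees I := by
    apply Algebra.subset_adjoin
    exact ⟨1, xx k, by rw [hI 1 le_rfl]; exact Ideal.subset_span (by simp), by simp [hxt]⟩
  have hintI : xt ∈ (integralClosure (↥(filtRees I)) (Polynomial (Rxy k)) :
      Set (Polynomial (Rxy k))) :=
    (integralClosure _ _).algebraMap_mem (⟨xt, hmemI⟩ : ↥(filtRees I))
  rw [heq] at hintI
  obtain ⟨q, hq_monic, hq_eval⟩ := hintI
  set m := q.natDegree with hm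
  have hsum : (Finset.range (m + 1)).sum
      (fun i => ((q.coeff i : ↥(filtRees J)) : Polynomial (Rxy k)) * xt ^ i) = 0 := by
    have h1 := Polynomial.aeval_eq_sum_range (p := q) xt
    have h0 : (Polynomial.aeval xt) q = 0 := hq_eval
    rw [h0] at h1
    rw [← hm] at h1
    simp only [Algebra.smul_def] at h1
    exact h1.symm
  have hcoeff : (Finset.range (m + 1)).sum
      (fun i => xx k ^ i * ((q.coeff i : Polynomial (Rxy k))).coeff (m - i)) = 0 := by
    have hc := congrArg (fun p => Polynomial.coeff p m) hsum
    simp only [Polynomial.finset_sum_coeff, Polynomial.coeff_zero] at hc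
    refine Eq.trans ?_ hc
    apply Finset.sum_congr rfl
    intro i hi
    rw [Finset.mem_range, Nat.lt_succ_iff] at hi
    have hxp : xt ^ i = Polynomial.C (xx k ^ i) * Polynomial.X ^ i := by
      rw [hxt, mul_pow, Polynomial.C_pow]
    rw [hxp, ← mul_assoc,
      mul_comm ((q.coeff i : Polynomial (Rxy k))) (Polynomial.C (xx k ^ i)),
      mul_assoc, Polynomial.coeff_C_mul, Polynomial.coeff_mul_X_pow', if_pos hi]
  -- split off the top term
  rw [Finset.sum_range_succ] at hcoeff
  have htop : xx k ^ m * ((q.coeff m : Polynomial (Rxy k))).coeff (m - m) = xx k ^ m := by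
    have h1 : q.coeff m = 1 := hq_monic.coeff_natDegree
    rw [h1, Nat.sub_self]
    norm_num
  rw [htop] at hcoeff
  have hxm : xx k ^ m ∈ Ideal.span {xx k ^ m} * mA := by
    have heqneg : xx k ^ m = -(Finset.range m).sum
        (fun i => xx k ^ i * ((q.coeff i : Polynomial (Rxy k))).coeff (m - i)) :=
      eq_neg_of_add_eq_zero_right hcoeff
    have hneg : -(Finset.range m).sum
        (fun i => xx k ^ i * ((q.coeff i : Polynomial (Rxy k))).coeff (m - i))
        ∈ Ideal.span {xx k ^ m} * mA := by
      refine neg_mem (Ideal.sum_mem _ ?_)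
      intro i hi
      rw [Finset.mem_range] at hi
      have hcm : ((q.coeff i : Polynomial (Rxy k))).coeff (m - i)
          ∈ Ideal.span {xx k ^ (m - i)} * mA :=
        coeffMem (xx k) mA J hJle _ (q.coeff i).2 (m - i) (by omega)
      have h2 : xx k ^ i * ((q.coeff i : Polynomial (Rxy k))).coeff (m - i)
          ∈ Ideal.span {xx k ^ i} * (Ideal.span {xx k ^ (m - i)} * mA) :=
        Ideal.mul_mem_mul (Ideal.mem_span_singleton_self _) hcm
      rwa [← mul_assoc, Ideal.span_singleton_mul_span_singleton, ← pow_add,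
        Nat.add_sub_cancel' (le_of_lt hi)] at h2
    rwa [← heqneg] at hneg
  rw [Ideal.mem_span_singleton_mul] at hxm
  obtain ⟨w, hw, hxw⟩ := hxm
  have hunit : IsUnit (1 - w) := by
    have hwmax : w ∈ IsLocalRing.maximalIdeal (Rxy k) := by
      have hmap : mA = Ideal.map (algebraMap (MvPolynomial (Fin 2) k) (Rxy k)) (mxy k) := by
        rw [Ideal.map_span]
        congr 1
        simp [Set.image_insert_eq]
        exact hmA
      rw [hmap, Localization.AtPrime.map_eq_maximalIdeal] at hw
      exact hw
    exact IsLocalRing.isUnit_one_sub_self_of_mem_nonunits w hwmax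
  have hzero : xx k ^ m * (1 - w) = 0 := by
    rw [mul_sub, mul_one, hxw, sub_self]
  rcases mul_eq_zero.mp hzero with h | h
  · exact pow_ne_zero m hxne h
  · exact hunit.ne_zero h
end
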